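/- Let R₁,…,R_m,R be i.i.d. real random variables with atomless common distribution, fix δ ∈ (0,1), and let p = ⌈(1-δ)(m+1)⌉ with p ≤ m. Then the probability (over all m+1 samples jointly) that |{i ∈ {1,…,m} : R_i ≥ R}| + 1 ≤ ⌊δ(m+1)⌋ is at most δ; i.e., the vanilla conformal set predictor Γ_δ = {ω : |{i : R_i ≥ R(ω)}|+1 > δ(m+1)} is conservatively valid at level δ. -/

import Mathlib

open MeasureTheory Finset ENNReal

private lemma rank_filter_card {n k : ℕ} (f : Fin n → ℝ) (hf : Function.Injective f)
    (hk : k ≤ n) :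
    (univ.filter (fun j : Fin n =>
      (univ.filter (fun j' : Fin n => f j ≤ f j')).card ≤ k)).card = k := by
  set r : Fin n → ℕ := fun j => (univ.filter (fun j' : Fin n => f j ≤ f j')).card with hr
  have hmono : ∀ a b : Fin n, f a < f b → r b < r a := by
    intro a b hab
    apply Finset.card_lt_card
    constructor
    · intro j' hj'
      simp only [Finset.mem_filter, Finset.mem_univ, true_and] at hj' ⊢
      exact hab.le.trans hj'
    · intro hsub
      have ha : a ∈ univ.filter (fun j' : Fin n => f a ≤ f j') := by simp
      have := hsub ha
      simp only [Finset.mem_filter, Finset.mem_univ, true_and] at this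
      exact absurd this (not_le.mpr hab)
  have hinj : Function.Injective r := by
    intro a b hab
    by_contra hne
    rcases (hf.ne hne).lt_or_gt with h | h
    · exact absurd hab (hmono a b h).ne'
    · exact absurd hab (hmono b a h).ne
  have hrange : ∀ j, r j ∈ Finset.Icc 1 n := by
    intro j
    rw [Finset.mem_Icc]
    constructor
    · exact Nat.one_le_iff_ne_zero.mpr (Finset.card_ne_zero_of_mem (by simp : j ∈ _))
    · calc r j ≤ (univ : Finset (Fin n)).card := Finset.card_filter_le _ _
        _ = n := by simp
  have himage : univ.image r = Finset.Icc 1 n := by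
    apply Finset.eq_of_subset_of_card_le
    · intro x hx
      rcases Finset.mem_image.mp hx with ⟨j, _, rfl⟩
      exact hrange j
    · rw [Finset.card_image_of_injective _ hinj, Finset.card_univ, Fintype.card_fin,
        Nat.card_Icc]
      omega
  calc (univ.filter (fun j : Fin n => r j ≤ k)).card
      = ((univ.filter (fun j : Fin n => r j ≤ k)).image r).card :=
        (Finset.card_image_of_injective _ hinj).symm
    _ = ((univ.image r).filter (fun x => x ≤ k)).card := by
        rw [Finset.filter_image]
    _ = ((Finset.Icc 1 n).filter (fun x => x ≤ k)).card := by rw [himage]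
    _ = (Finset.Icc 1 k).card := by
        congr 1
        ext x
        simp only [Finset.mem_filter, Finset.mem_Icc]
        omega
    _ = k := by rw [Nat.card_Icc]; omega

private lemma pi_eq_coord_null {n : ℕ} (μ : Measure ℝ) [IsProbabilityMeasure μ] [NullSingletonClass μ]
    {i j : Fin (n + 1)} (h : j ≠ i) :
    Measure.pi (fun _ : Fin (n + 1) => μ) {ω | ω i = ω j} = 0 := by
  obtain ⟨j', hj'⟩ := Fin.exists_succAbove_eq h
  set e := MeasurableEquiv.piFinSuccAbove (fun _ : Fin (n + 1) => ℝ) i with he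
  have hmp := measurePreserving_piFinSuccAbove (fun _ : Fin (n + 1) => μ) i
  have hs : MeasurableSet {p : ℝ × (Fin n → ℝ) | p.1 = p.2 j'} :=
    measurableSet_eq_fun measurable_fst ((measurable_pi_apply j').comp measurable_snd)
  have hset : {ω : Fin (n + 1) → ℝ | ω i = ω j}
      = e ⁻¹' {p : ℝ × (Fin n → ℝ) | p.1 = p.2 j'} := by
    ext ω
    simp [he, MeasurableEquiv.piFinSuccAbove, ← hj', Fin.removeNth]
    exact Iff.rfl
  rw [hset, hmp.measure_preimage hs.nullMeasurableSet, Measure.prod_apply hs]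
  have : ∀ x : ℝ, (Measure.pi fun _ : Fin n => μ)
      (Prod.mk x ⁻¹' {p : ℝ × (Fin n → ℝ) | p.1 = p.2 j'}) = 0 := by
    intro x
    have : (Prod.mk x ⁻¹' {p : ℝ × (Fin n → ℝ) | p.1 = p.2 j'})
        = {y : Fin n → ℝ | y j' = x} := by
      ext y; simp [eq_comm]
    rw [this]
    exact Measure.pi_hyperplane (fun _ : Fin n => μ) j' x
  have hz : ∀ x : ℝ, (Measure.pi fun _ : Fin n => μ) {a : Fin n → ℝ | x = a j'} = 0 := by
    intro x
    have h2 : {a : Fin n → ℝ | x = a j'} = {a : Fin n → ℝ | a j' = x} := by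
      ext y; exact eq_comm
    rw [h2]
    exact Measure.pi_hyperplane (fun _ : Fin n => μ) j' x
  simp [hz]

private lemma rnk_meas {n : ℕ} (k : ℕ) (j : Fin n) :
    MeasurableSet {ω : Fin n → ℝ | (univ.filter (fun j' : Fin n => ω j ≤ ω j')).card ≤ k} := by
  have hr : Measurable (fun ω : Fin n → ℝ =>
      (univ.filter (fun j' : Fin n => ω j ≤ ω j')).card) := by
    have : (fun ω : Fin n → ℝ => (univ.filter (fun j' : Fin n => ω j ≤ ω j')).card)
        = fun ω => ∑ j' : Fin n, if ω j ≤ ω j' then 1 else 0 := by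
      funext ω; rw [Finset.card_filter]
    rw [this]
    exact Finset.measurable_sum _ (fun j' _ =>
      Measurable.ite (measurableSet_le (measurable_pi_apply j) (measurable_pi_apply j'))
        measurable_const measurable_const)
  exact hr (MeasurableSet.of_discrete : MeasurableSet (Set.Iic k))

private lemma perm_rank {n : ℕ} (μ : Measure ℝ) [IsProbabilityMeasure μ] (k : ℕ)
    (j j₀ : Fin n) :
    Measure.pi (fun _ : Fin n => μ)
      {ω : Fin n → ℝ | (univ.filter (fun j' : Fin n => ω j ≤ ω j')).card ≤ k}
    = Measure.pi (fun _ : Fin n => μ)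
      {ω : Fin n → ℝ | (univ.filter (fun j' : Fin n => ω j₀ ≤ ω j')).card ≤ k} := by
  set σ : Equiv.Perm (Fin n) := Equiv.swap j j₀ with hσ
  have hmp := MeasureTheory.measurePreserving_piCongrLeft (fun _ : Fin n => μ) σ
  have hpre : (MeasurableEquiv.piCongrLeft (fun _ : Fin n => ℝ) σ) ⁻¹'
      {ω : Fin n → ℝ | (univ.filter (fun j' : Fin n => ω j₀ ≤ ω j')).card ≤ k}
      = {ω : Fin n → ℝ | (univ.filter (fun j' : Fin n => ω j ≤ ω j')).card ≤ k} := by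
    ext x
    have happ : ∀ b : Fin n,
        (MeasurableEquiv.piCongrLeft (fun _ : Fin n => ℝ) σ) x b = x (σ.symm b) := by
      intro b
      rw [MeasurableEquiv.coe_piCongrLeft]
      conv_lhs => rw [show b = σ (σ.symm b) from (σ.apply_symm_apply b).symm]
      rw [Equiv.piCongrLeft_apply_apply]
    simp only [Set.mem_preimage, Set.mem_setOf_eq, happ]
    have hσj₀ : σ.symm j₀ = j := by simp [hσ]
    rw [hσj₀]
    have hcard : (univ.filter (fun j' : Fin n => x j ≤ x (σ.symm j'))).card
        = (univ.filter (fun j' : Fin n => x j ≤ x j')).card := by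
      apply Finset.card_bij (fun j' _ => σ.symm j')
      · intro a ha; simp only [Finset.mem_filter, Finset.mem_univ, true_and] at ha ⊢; exact ha
      · intro a _ b _ hab; exact σ.symm.injective hab
      · intro b hb
        simp only [Finset.mem_filter, Finset.mem_univ, true_and] at hb
        exact ⟨σ b, by simpa using hb, by simp⟩
    rw [hcard]
  calc Measure.pi (fun _ : Fin n => μ)
        {ω : Fin n → ℝ | (univ.filter (fun j' : Fin n => ω j ≤ ω j')).card ≤ k}
      = Measure.pi (fun _ : Fin n => μ)
          ((MeasurableEquiv.piCongrLeft (fun _ : Fin n => ℝ) σ) ⁻¹'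
          {ω : Fin n → ℝ | (univ.filter (fun j' : Fin n => ω j₀ ≤ ω j')).card ≤ k}) := by
        rw [hpre]
    _ = _ := hmp.measure_preimage (rnk_meas k j₀).nullMeasurableSet

private lemma key_rank_measure {m k : ℕ} (μ : Measure ℝ) [IsProbabilityMeasure μ] [NullSingletonClass μ]
    (hk : k ≤ m + 1) :
    Measure.pi (fun _ : Fin (m + 1) => μ)
      {ω : Fin (m + 1) → ℝ |
        (univ.filter (fun j' : Fin (m + 1) => ω (Fin.last m) ≤ ω j')).card ≤ k}
      = (k : ℝ≥0∞) / ((m : ℝ≥0∞) + 1) := by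
  set ν := Measure.pi (fun _ : Fin (m + 1) => μ) with hν
  have : IsProbabilityMeasure ν := by rw [hν]; infer_instance
  set E : Fin (m + 1) → Set (Fin (m + 1) → ℝ) := fun j =>
    {ω : Fin (m + 1) → ℝ | (univ.filter (fun j' : Fin (m + 1) => ω j ≤ ω j')).card ≤ k}
    with hE
  have hinj : ∀ᵐ ω ∂ν, Function.Injective ω := by
    rw [MeasureTheory.ae_iff]
    refine measure_mono_null (t := ⋃ (i : Fin (m + 1)) (j : Fin (m + 1)),
      {ω : Fin (m + 1) → ℝ | j ≠ i ∧ ω i = ω j}) ?_ ?_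
    · intro ω hω
      simp only [Set.mem_setOf_eq, Function.Injective] at hω
      push_neg at hω
      obtain ⟨a, b, hab, hne⟩ := hω
      exact Set.mem_iUnion.mpr ⟨a, Set.mem_iUnion.mpr ⟨b, ⟨hne.symm, hab⟩⟩⟩
    · apply measure_iUnion_null
      intro i
      apply measure_iUnion_null
      intro j
      by_cases h : j = i
      · subst h
        have : {ω : Fin (m + 1) → ℝ | j ≠ j ∧ ω j = ω j} = ∅ := by
          ext ω; simp
        rw [this]; simp
      · exact measure_mono_null (fun ω hω => hω.2) (pi_eq_coord_null μ h)
  have hsum : ∑ j : Fin (m + 1), ν (E j) = (k : ℝ≥0∞) := by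
    have h1 : ∑ j : Fin (m + 1), ν (E j)
        = ∫⁻ ω, ∑ j : Fin (m + 1), (E j).indicator (fun _ => (1 : ℝ≥0∞)) ω ∂ν := by
      rw [lintegral_finset_sum (f := fun j ω => (E j).indicator (fun _ => (1 : ℝ≥0∞)) ω)
        _ (fun j _ => measurable_one.indicator (rnk_meas k j))]
      congr 1
      funext j
      exact (lintegral_indicator_one (μ := ν) (rnk_meas k j)).symm
    rw [h1]
    have h2 : ∀ᵐ ω ∂ν, ∑ j : Fin (m + 1), (E j).indicator (fun _ => (1 : ℝ≥0∞)) ω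
        = (k : ℝ≥0∞) := by
      filter_upwards [hinj] with ω hω
      have hcard := rank_filter_card ω hω hk
      calc ∑ j : Fin (m + 1), (E j).indicator (fun _ => (1 : ℝ≥0∞)) ω
          = ∑ j : Fin (m + 1), if (univ.filter
              (fun j' : Fin (m + 1) => ω j ≤ ω j')).card ≤ k then (1 : ℝ≥0∞) else 0 := by
            congr 1; funext j; simp [hE, Set.indicator_apply]
        _ = ((univ.filter (fun j : Fin (m + 1) => (univ.filter
              (fun j' : Fin (m + 1) => ω j ≤ ω j')).card ≤ k)).card : ℝ≥0∞) := by
            rw [Finset.card_filter]; push_cast; rfl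
        _ = (k : ℝ≥0∞) := by rw [hcard]
    rw [lintegral_congr_ae h2, lintegral_const, measure_univ, mul_one]
  have hperm : ∀ j : Fin (m + 1), ν (E j) = ν (E (Fin.last m)) :=
    fun j => perm_rank μ k j (Fin.last m)
  have hmain : ((m : ℝ≥0∞) + 1) * ν (E (Fin.last m)) = (k : ℝ≥0∞) := by
    have : ∑ j : Fin (m + 1), ν (E j) = (m + 1 : ℕ) • ν (E (Fin.last m)) := by
      rw [Finset.sum_congr rfl (fun j _ => hperm j), Finset.sum_const, Finset.card_univ,
        Fintype.card_fin]
    rw [this, nsmul_eq_mul] at hsum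
    rw [← hsum]
    push_cast
    ring_nf
  have hne0 : ((m : ℝ≥0∞) + 1) ≠ 0 := by simp
  have hnetop : ((m : ℝ≥0∞) + 1) ≠ ⊤ := by simp
  rw [ENNReal.eq_div_iff hne0 hnetop]
  exact hmain

/-- Vanilla conformal prediction validity: for i.i.d. atomless nonconformity scores
`R₁,…,R_m` and a fresh score `R = ω (Fin.last m)`, and `δ ∈ (0,1)`, the probability
that `|{i : R_i ≥ R}| + 1 ≤ ⌊δ(m+1)⌋` is at most `δ`; i.e., the vanilla conformal set
predictor is conservatively valid at level `δ`. -/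
theorem stmt_7 (m : ℕ) (hm : 1 ≤ m) (μ : Measure ℝ) [IsProbabilityMeasure μ] [NullSingletonClass μ]
    (δ : ℝ) (hδ : δ ∈ Set.Ioo (0:ℝ) 1) :
    Measure.pi (fun _ : Fin (m + 1) => μ)
        {ω | ((Finset.univ.filter
              (fun i : Fin m => ω (Fin.last m) ≤ ω i.castSucc)).card + 1 : ℤ)
            ≤ ⌊δ * ((m : ℝ) + 1)⌋}
      ≤ ENNReal.ofReal δ := by
  obtain ⟨hδ0, hδ1⟩ := hδ
  set K : ℤ := ⌊δ * ((m : ℝ) + 1)⌋ with hK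
  by_cases hK1 : K < 1
  · have hempty : {ω : Fin (m + 1) → ℝ | ((Finset.univ.filter
        (fun i : Fin m => ω (Fin.last m) ≤ ω i.castSucc)).card + 1 : ℤ) ≤ K} = ∅ := by
      ext ω
      simp only [Set.mem_setOf_eq, Set.mem_empty_iff_false, iff_false, not_le]
      have : (0 : ℤ) ≤ ((Finset.univ.filter
          (fun i : Fin m => ω (Fin.last m) ≤ ω i.castSucc)).card : ℤ) := Int.natCast_nonneg _
      omega
    rw [hempty]
    simp
  · push_neg at hK1
    set k : ℕ := K.toNat with hk
    have hKk : (k : ℤ) = K := Int.toNat_of_nonneg (by omega)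
    have hKm : K ≤ (m : ℤ) := by
      have hlt : K < (m : ℤ) + 1 := by
        rw [hK]
        apply Int.floor_lt.mpr
        push_cast
        nlinarith
      omega
    have hkm : k ≤ m + 1 := by omega
    have hset : {ω : Fin (m + 1) → ℝ | ((Finset.univ.filter
          (fun i : Fin m => ω (Fin.last m) ≤ ω i.castSucc)).card + 1 : ℤ) ≤ K}
        = {ω : Fin (m + 1) → ℝ |
            (univ.filter (fun j' : Fin (m + 1) => ω (Fin.last m) ≤ ω j')).card ≤ k} := by
      ext ω
      have hcardrel : (univ.filter (fun j' : Fin (m + 1) => ω (Fin.last m) ≤ ω j')).card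
          = (univ.filter (fun i : Fin m => ω (Fin.last m) ≤ ω i.castSucc)).card + 1 := by
        rw [Fin.univ_castSuccEmb, Finset.filter_cons, if_pos (le_refl _), Finset.card_cons,
          Finset.filter_map, Finset.card_map]
        rfl
      simp only [Set.mem_setOf_eq, hcardrel]
      omega
    rw [hset, key_rank_measure μ hkm]
    rw [ENNReal.div_le_iff (by simp) (by simp)]
    have h1 : ((m : ℝ≥0∞) + 1) = ENNReal.ofReal ((m : ℝ) + 1) := by
      rw [ENNReal.ofReal_add (by positivity) zero_le_one]
      simp
    rw [h1, ← ENNReal.ofReal_natCast k, ← ENNReal.ofReal_mul hδ0.le]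
    apply ENNReal.ofReal_le_ofReal
    have : ((k : ℤ) : ℝ) ≤ δ * ((m : ℝ) + 1) := by
      rw [hKk, hK]
      exact Int.floor_le _
    push_cast at this ⊢
    linarith
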